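/- Let r be an integer and set s = r+1. In ℚ[[t]] define v = t·(1−rt)^{−1}, w(t) = v·(1+v)^{r²−1}, and z(t) = t·(1+(1−s)t)^{1−s}. Let g_r ∈ ℚ[[w]] be the unique power series with g_r(v(1+v)^{r²−1}) = 1+v in ℚ[[v]], and let P_s ∈ ℚ[[z]] be the unique power series with P_s(t(1+(1−s)t)^{1−s}) = (1+(1−s)t)^{−1}·(1+(2−s)t) in ℚ[[t]]. Then g_r(w(t)) = P_s(z(t)) as elements of ℚ[[t]]. -/

import Mathlib

open PowerSeries

/-- Composition (substitution) `f(g)` of formal power series, correct whenever the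
constant term of `g` vanishes. -/
noncomputable def comp (f g : ℚ⟦X⟧) : ℚ⟦X⟧ :=
  PowerSeries.mk fun n => ∑ k ∈ Finset.range (n + 1), coeff k f * coeff n (g ^ k)

/-- Integer power of a formal power series (using the formal inverse for negative
exponents). -/
noncomputable def zp (f : ℚ⟦X⟧) (n : ℤ) : ℚ⟦X⟧ :=
  f ^ n.toNat * f⁻¹ ^ (-n).toNat

namespace SegreVerlindeAux

lemma coeff_comp (f u : ℚ⟦X⟧) (n : ℕ) :
    coeff n (comp f u) = ∑ k ∈ Finset.range (n + 1), coeff k f * coeff n (u ^ k) := by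
  simp [comp]

lemma coeff_pow_eq_zero {u : ℚ⟦X⟧} (hu : constantCoeff u = 0) {n k : ℕ} (h : n < k) :
    coeff n (u ^ k) = 0 := by
  have hd : (X : ℚ⟦X⟧) ^ k ∣ u ^ k :=
    pow_dvd_pow_of_dvd (PowerSeries.X_dvd_iff.mpr hu) k
  exact (PowerSeries.X_pow_dvd_iff.mp hd) n h

lemma constantCoeff_comp (f u : ℚ⟦X⟧) :
    constantCoeff (comp f u) = constantCoeff f := by
  have := coeff_comp f u 0
  simpa using this

lemma coeff_comp_of_lt {u : ℚ⟦X⟧} (hu : constantCoeff u = 0) (f : ℚ⟦X⟧) {n N : ℕ}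
    (h : n < N) :
    coeff n (comp f u) = ∑ k ∈ Finset.range N, coeff k f * coeff n (u ^ k) := by
  rw [coeff_comp]
  apply Finset.sum_subset
  · exact Finset.range_subset_range.mpr h
  · intro k _ hk
    have : n < k := by simpa using hk
    rw [coeff_pow_eq_zero hu this, mul_zero]

lemma comp_one (u : ℚ⟦X⟧) : comp 1 u = 1 := by
  ext n
  rw [coeff_comp]
  simp [PowerSeries.coeff_one]

lemma comp_add (f₁ f₂ u : ℚ⟦X⟧) : comp (f₁ + f₂) u = comp f₁ u + comp f₂ u := by
  ext n
  simp [coeff_comp, add_mul, Finset.sum_add_distrib]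

lemma comp_X {u : ℚ⟦X⟧} (hu : constantCoeff u = 0) : comp X u = u := by
  ext n
  rw [coeff_comp]
  rcases n with _ | m
  · simp [hu, PowerSeries.coeff_X]
  · rw [Finset.sum_eq_single 1]
    · simp
    · intro k _ hk
      simp [PowerSeries.coeff_X, hk]
    · intro h
      exfalso
      exact h (Finset.mem_range.mpr (by omega))

/-- Triangle reindexing lemma. -/
lemma tri (n : ℕ) (F : ℕ → ℕ → ℚ) (hF : ∀ i j, n < i + j → F i j = 0) :
    ∑ i ∈ Finset.range (n + 1), ∑ j ∈ Finset.range (n + 1), F i j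
      = ∑ k ∈ Finset.range (n + 1), ∑ p ∈ Finset.HasAntidiagonal.antidiagonal k, F p.1 p.2 := by
  rw [← Finset.sum_product', Finset.sum_sigma']
  rw [show (∑ p ∈ Finset.range (n + 1) ×ˢ Finset.range (n + 1), F p.1 p.2)
      = ∑ p ∈ (Finset.range (n + 1) ×ˢ Finset.range (n + 1)).filter
          (fun p => p.1 + p.2 ≤ n), F p.1 p.2 from
    (Finset.sum_filter_of_ne (fun p _ h => by
      by_contra hc
      exact h (hF p.1 p.2 (lt_of_not_ge hc)))).symm]
  refine Finset.sum_bij' (fun p _ => (⟨p.1 + p.2, p⟩ : Σ _ : ℕ, ℕ × ℕ))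
    (fun σ _ => σ.2) ?_ ?_ ?_ ?_ ?_
  · intro p hp
    simp only [Finset.mem_filter, Finset.mem_product, Finset.mem_range] at hp
    simp only [Finset.mem_sigma, Finset.mem_range, Finset.HasAntidiagonal.mem_antidiagonal]
    exact ⟨by omega, trivial⟩
  · intro σ hσ
    simp only [Finset.mem_sigma, Finset.mem_range, Finset.HasAntidiagonal.mem_antidiagonal] at hσ
    simp only [Finset.mem_filter, Finset.mem_product, Finset.mem_range]
    omega
  · intro p _; rfl
  · intro σ hσ
    simp only [Finset.mem_sigma, Finset.mem_range, Finset.HasAntidiagonal.mem_antidiagonal] at hσ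
    exact Sigma.ext hσ.2 (by simp)
  · intro p _; rfl

lemma comp_mul {u : ℚ⟦X⟧} (hu : constantCoeff u = 0) (f₁ f₂ : ℚ⟦X⟧) :
    comp (f₁ * f₂) u = comp f₁ u * comp f₂ u := by
  ext n
  have key : ∀ i j : ℕ, n < i + j →
      coeff i f₁ * coeff j f₂ * coeff n (u ^ (i + j)) = 0 := fun i j h => by
    rw [coeff_pow_eq_zero hu h, mul_zero]
  calc coeff n (comp (f₁ * f₂) u)
      = ∑ k ∈ Finset.range (n + 1), coeff k (f₁ * f₂) * coeff n (u ^ k) := coeff_comp _ _ n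
    _ = ∑ k ∈ Finset.range (n + 1), ∑ p ∈ Finset.HasAntidiagonal.antidiagonal k,
          coeff p.1 f₁ * coeff p.2 f₂ * coeff n (u ^ (p.1 + p.2)) := by
        refine Finset.sum_congr rfl fun k _ => ?_
        rw [PowerSeries.coeff_mul, Finset.sum_mul]
        refine Finset.sum_congr rfl fun p hp => ?_
        rw [Finset.HasAntidiagonal.mem_antidiagonal.mp hp]
    _ = ∑ i ∈ Finset.range (n + 1), ∑ j ∈ Finset.range (n + 1),
          coeff i f₁ * coeff j f₂ * coeff n (u ^ (i + j)) := (tri n _ key).symm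
    _ = ∑ i ∈ Finset.range (n + 1), ∑ j ∈ Finset.range (n + 1),
          coeff i f₁ * coeff j f₂ *
            ∑ p ∈ Finset.HasAntidiagonal.antidiagonal n, coeff p.1 (u ^ i) * coeff p.2 (u ^ j) := by
        refine Finset.sum_congr rfl fun i _ => Finset.sum_congr rfl fun j _ => ?_
        rw [← PowerSeries.coeff_mul, ← pow_add]
    _ = ∑ i ∈ Finset.range (n + 1), ∑ j ∈ Finset.range (n + 1), ∑ p ∈ Finset.HasAntidiagonal.antidiagonal n,
          (coeff i f₁ * coeff p.1 (u ^ i)) * (coeff j f₂ * coeff p.2 (u ^ j)) := by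
        refine Finset.sum_congr rfl fun i _ => Finset.sum_congr rfl fun j _ => ?_
        rw [Finset.mul_sum]
        exact Finset.sum_congr rfl fun p _ => by ring
    _ = ∑ i ∈ Finset.range (n + 1), ∑ p ∈ Finset.HasAntidiagonal.antidiagonal n, ∑ j ∈ Finset.range (n + 1),
          (coeff i f₁ * coeff p.1 (u ^ i)) * (coeff j f₂ * coeff p.2 (u ^ j)) := by
        exact Finset.sum_congr rfl fun i _ => Finset.sum_comm
    _ = ∑ p ∈ Finset.HasAntidiagonal.antidiagonal n, ∑ i ∈ Finset.range (n + 1), ∑ j ∈ Finset.range (n + 1),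
          (coeff i f₁ * coeff p.1 (u ^ i)) * (coeff j f₂ * coeff p.2 (u ^ j)) := by
        exact Finset.sum_comm
    _ = ∑ p ∈ Finset.HasAntidiagonal.antidiagonal n,
          coeff p.1 (comp f₁ u) * coeff p.2 (comp f₂ u) := by
        refine Finset.sum_congr rfl fun p hp => ?_
        have hp' := Finset.HasAntidiagonal.mem_antidiagonal.mp hp
        rw [← Finset.sum_mul_sum,
          ← coeff_comp_of_lt hu f₁ (show p.1 < n + 1 by omega),
          ← coeff_comp_of_lt hu f₂ (show p.2 < n + 1 by omega)]
    _ = coeff n (comp f₁ u * comp f₂ u) := (PowerSeries.coeff_mul _ _ _).symm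

lemma comp_pow {u : ℚ⟦X⟧} (hu : constantCoeff u = 0) (f : ℚ⟦X⟧) (k : ℕ) :
    comp (f ^ k) u = (comp f u) ^ k := by
  induction k with
  | zero => simpa using comp_one u
  | succ m ih => rw [pow_succ, pow_succ, comp_mul hu, ih]

lemma comp_inv {u : ℚ⟦X⟧} (hu : constantCoeff u = 0) {f : ℚ⟦X⟧}
    (hf : constantCoeff f ≠ 0) : comp f⁻¹ u = (comp f u)⁻¹ := by
  have hc : constantCoeff (comp f u) ≠ 0 := by rw [constantCoeff_comp]; exact hf
  rw [PowerSeries.eq_inv_iff_mul_eq_one hc, ← comp_mul hu,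
    PowerSeries.inv_mul_cancel f hf, comp_one]

lemma comp_zp {u : ℚ⟦X⟧} (hu : constantCoeff u = 0) {f : ℚ⟦X⟧}
    (hf : constantCoeff f ≠ 0) (m : ℤ) : comp (zp f m) u = zp (comp f u) m := by
  rw [zp, zp, comp_mul hu, comp_pow hu, comp_pow hu, comp_inv hu hf]

lemma comp_assoc {h v : ℚ⟦X⟧} (hh : constantCoeff h = 0) (hv : constantCoeff v = 0)
    (g : ℚ⟦X⟧) : comp (comp g h) v = comp g (comp h v) := by
  ext n
  calc coeff n (comp (comp g h) v)
      = ∑ k ∈ Finset.range (n + 1), coeff k (comp g h) * coeff n (v ^ k) :=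
        coeff_comp _ _ n
    _ = ∑ k ∈ Finset.range (n + 1), ∑ j ∈ Finset.range (n + 1),
          coeff j g * coeff k (h ^ j) * coeff n (v ^ k) := by
        refine Finset.sum_congr rfl fun k hk => ?_
        have hk' : k < n + 1 := Finset.mem_range.mp hk
        rw [coeff_comp_of_lt hh g hk', Finset.sum_mul]
    _ = ∑ j ∈ Finset.range (n + 1), coeff j g *
          ∑ k ∈ Finset.range (n + 1), coeff k (h ^ j) * coeff n (v ^ k) := by
        rw [Finset.sum_comm]
        refine Finset.sum_congr rfl fun j _ => ?_
        rw [Finset.mul_sum]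
        exact Finset.sum_congr rfl fun k _ => by ring
    _ = ∑ j ∈ Finset.range (n + 1), coeff j g * coeff n ((comp h v) ^ j) := by
        refine Finset.sum_congr rfl fun j _ => ?_
        rw [← coeff_comp (h ^ j) v n, comp_pow hv]
    _ = coeff n (comp g (comp h v)) := (coeff_comp _ _ n).symm

end SegreVerlindeAux

open SegreVerlindeAux in
/-- Segre–Verlinde correspondence `g_r(w(t)) = P_s(z(t))` with `P_s = V_s·W_s²`,
under the variable changes `w = v(1+v)^{r²-1}`, `z = t(1+(1-s)t)^{1-s}`,
`v = t(1-rt)⁻¹`, `s = r+1`. -/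
theorem segre_verlinde_g (r s : ℤ) (hs : s = r + 1)
    (v w z : ℚ⟦X⟧)
    (hv : v = X * (1 - C (r : ℚ) * X)⁻¹)
    (hw : w = v * zp (1 + v) (r ^ 2 - 1))
    (hz : z = X * zp (1 + C (1 - (s : ℚ)) * X) (1 - s))
    (g P : ℚ⟦X⟧)
    (hg : comp g (X * zp (1 + X) (r ^ 2 - 1)) = 1 + X)
    (hP : comp P z = (1 + C (1 - (s : ℚ)) * X)⁻¹ * (1 + C (2 - (s : ℚ)) * X)) :
    comp g w = comp P z := by
  -- constant coefficients
  have hv0 : constantCoeff v = 0 := by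
    rw [hv]; simp
  have hh0 : constantCoeff (X * zp (1 + X) (r ^ 2 - 1) : ℚ⟦X⟧) = 0 := by
    simp
  have h1v : constantCoeff (1 + v) ≠ 0 := by
    rw [map_add, hv0, map_one, add_zero]; exact one_ne_zero
  have h1X : constantCoeff (1 + X : ℚ⟦X⟧) ≠ 0 := by
    rw [map_add, constantCoeff_X, map_one, add_zero]; exact one_ne_zero
  -- comp (X * zp (1+X) m) v = w
  have hcomp1 : comp (1 + X) v = 1 + v := by
    rw [comp_add, comp_one, comp_X hv0]
  have hhv : comp (X * zp (1 + X) (r ^ 2 - 1)) v = w := by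
    rw [comp_mul hv0, comp_X hv0, comp_zp hv0 h1X, hcomp1, hw]
  -- left-hand side equals 1 + v
  have hLHS : comp g w = 1 + v := by
    rw [← hhv, ← comp_assoc hh0 hv0 g, hg, hcomp1]
  -- simplify constants using s = r + 1
  have hs1 : (1 - (s : ℚ)) = -(r : ℚ) := by rw [hs]; push_cast; ring
  have hs2 : (2 - (s : ℚ)) = 1 - (r : ℚ) := by rw [hs]; push_cast; ring
  have hone : (1 + C (1 - (s : ℚ)) * X : ℚ⟦X⟧) = 1 - C (r : ℚ) * X := by
    rw [hs1, map_neg]; ring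
  -- right-hand side
  rw [hLHS, hP, hone, hs2]
  -- both sides times (1 - C r X)
  set u : ℚ⟦X⟧ := 1 - C (r : ℚ) * X with hu
  have hu0 : constantCoeff u ≠ 0 := by
    rw [hu]; simp
  have hune : u ≠ 0 := fun h => hu0 (by rw [h]; simp)
  apply mul_left_cancel₀ hune
  have hinv : u * u⁻¹ = 1 := PowerSeries.mul_inv_cancel u hu0
  calc u * (1 + v)
      = u + X * (u * u⁻¹) := by rw [hv, hu]; ring
    _ = u + X := by rw [hinv, mul_one]
    _ = 1 + C (1 - (r : ℚ)) * X := by rw [hu, map_sub, map_one]; ring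
    _ = (u * u⁻¹) * (1 + C (1 - (r : ℚ)) * X) := by rw [hinv, one_mul]
    _ = u * (u⁻¹ * (1 + C (1 - (r : ℚ)) * X)) := by ring
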